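/- Let G' and α be the graph and coloring constructed from a graph G on n vertices and an integer t ≥ 1, and let k = n + t + 1. Let α_0, …, α_ℓ be a k-recoloring sequence with α_0 = α and ℓ ≤ 2t + 2t². Then for every vertex g_i ∈ V_G and every 0 ≤ x ≤ ℓ, α_x(g_i) ∈ {i, n + t + 1}; moreover, for every vertex b ∈ V_B and every 0 ≤ x ≤ ℓ, α_x(b) ≠ n + t + 1. -/

import Mathlib

/-- A `k`-coloring of `G`: colors in `{1,…,k}`, adjacent vertices differently colored. -/
def IsKColoring {V : Type*} (G : SimpleGraph V) (k : ℕ) (γ : V → ℕ) : Prop :=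
  (∀ v, γ v ∈ Finset.Icc 1 k) ∧ ∀ u v, G.Adj u v → γ u ≠ γ v

/-- A `k`-recoloring sequence `seq 0, …, seq ℓ` from `α` to `β`:
all are `k`-colorings, and consecutive colorings differ on at most one vertex. -/
def IsRecolSeq {V : Type*} (G : SimpleGraph V) (k : ℕ) (seq : ℕ → V → ℕ)
    (ℓ : ℕ) (α β : V → ℕ) : Prop :=
  seq 0 = α ∧ seq ℓ = β ∧ (∀ i ≤ ℓ, IsKColoring G k (seq i)) ∧
  ∀ i < ℓ, ∀ u w, seq i u ≠ seq (i+1) u → seq i w ≠ seq (i+1) w → u = w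

/-- The graph `B_k`: vertices `b^i_j` for `i,j ∈ {1,…,k}`, with `b^i_j ~ b^{i'}_{j'}`
iff `i ≠ i'` and `j ≠ j'` (the complement of `K_k □ K_k`). -/
def Bgraph (k : ℕ) : SimpleGraph (Fin k × Fin k) where
  Adj p q := p.1 ≠ q.1 ∧ p.2 ≠ q.2
  symm := ⟨fun p q h => ⟨h.1.symm, h.2.symm⟩⟩
  loopless := ⟨fun p h => h.1 rfl⟩

/-- The coloring `α^k` of `B_k`: `α^k(b^i_j) = i`. -/
def alphak (k : ℕ) : Fin k × Fin k → ℕ := fun p => p.1.val + 1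

/-- The coloring `β^k` of `B_k`: `β^k(b^i_j) = j`. -/
def betak (k : ℕ) : Fin k × Fin k → ℕ := fun p => p.2.val + 1

/-- Vertices of the graph `G'` of the W[1]-hardness construction:
`g i` are the vertices `g_1,…,g_n` (copies of `v_1,…,v_n`), `b i j` are the vertices of
`V_B = {b^i_j : i,j ∈ {1,…,t}}`, and `c m s` is the `s`-th vertex of the color-guard set
`C_{m+1}` (each of the `n+t+1` sets `C_1,…,C_{n+t+1}` has `2t + 2t²` vertices). -/
inductive GV (n t : ℕ) : Type
  | g : Fin n → GV n t
  | b : Fin t → Fin t → GV n t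
  | c : Fin (n + t + 1) → Fin (2 * t + 2 * t ^ 2) → GV n t
deriving DecidableEq

/-- The graph `G'` of the W[1]-hardness construction, built from `G`. -/
def Wgraph (n t : ℕ) (G : SimpleGraph (Fin n)) : SimpleGraph (GV n t) where
  Adj w w' :=
    match w, w' with
    | .g p, .g q => G.Adj p q
    | .g _, .b _ _ => True
    | .b _ _, .g _ => True
    | .b i j, .b i' j' => i ≠ i' ∧ j ≠ j'
    | .g i, .c m _ => m.val ≠ i.val ∧ m.val ≠ n + t
    | .c m _, .g i => m.val ≠ i.val ∧ m.val ≠ n + t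
    | .b _ _, .c m _ => m.val = n + t
    | .c m _, .b _ _ => m.val = n + t
    | .c _ _, .c _ _ => False
  symm := by
    constructor
    rintro (p | ⟨i, j⟩ | ⟨m, s⟩) (q | ⟨i', j'⟩ | ⟨m', s'⟩) h
    · exact G.symm.symm _ _ h
    · trivial
    · exact h
    · trivial
    · exact ⟨fun e => h.1 e.symm, fun e => h.2 e.symm⟩
    · exact h
    · exact h
    · exact h
    · exact h
  loopless := by
    constructor
    rintro (p | ⟨i, j⟩ | ⟨m, s⟩) h
    · exact G.loopless.irrefl p h
    · exact h.1 rfl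
    · exact h

/-- The `(n+t+1)`-coloring `α` of `G'`: `α(g_i) = i`, `α(c) = i` for `c ∈ C_i`,
`α(b^i_j) = n + i`. -/
def Walpha (n t : ℕ) : GV n t → ℕ
  | .g i => i.val + 1
  | .b i _ => n + i.val + 1
  | .c m _ => m.val + 1

/-- The `(n+t+1)`-coloring `β` of `G'`: agrees with `α` on `V_G ∪ V_C`, and
`β(b^i_j) = n + j`. -/
def Wbeta (n t : ℕ) : GV n t → ℕ
  | .g i => i.val + 1
  | .b _ j => n + j.val + 1
  | .c m _ => m.val + 1

/-- For `k = n + t + 1` and any `k`-recoloring sequence `α_0,…,α_ℓ` of `G'`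
with `α_0 = α` and `ℓ ≤ 2t + 2t²`: every `g_i` only ever gets a color in `{i, n+t+1}`,
and no vertex of `V_B` ever gets the color `n+t+1`. -/
theorem stmt_6 (n t : ℕ) (ht : 1 ≤ t) (G : SimpleGraph (Fin n))
    (ℓ : ℕ) (hℓ : ℓ ≤ 2 * t + 2 * t ^ 2) (seq : ℕ → GV n t → ℕ)
    (hseq : IsRecolSeq (Wgraph n t G) (n + t + 1) seq ℓ (Walpha n t) (seq ℓ)) :
    (∀ (i : Fin n) (x : ℕ), x ≤ ℓ →
        seq x (.g i) = i.val + 1 ∨ seq x (.g i) = n + t + 1) ∧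
    (∀ (i j : Fin t) (x : ℕ), x ≤ ℓ → seq x (.b i j) ≠ n + t + 1) := by
  obtain ⟨h0, -, hcol, hone⟩ := hseq
  have key : ∀ x, x ≤ ℓ →
      (∀ i : Fin n, seq x (.g i) = i.val + 1 ∨ seq x (.g i) = n + t + 1) ∧
      (∀ i j : Fin t, seq x (.b i j) ≠ n + t + 1) ∧
      (∀ m : Fin (n + t + 1),
        2 * t + 2 * t ^ 2 - x ≤
          (Finset.univ.filter
            (fun s : Fin (2 * t + 2 * t ^ 2) => seq x (.c m s) = m.val + 1)).card) := by
    intro x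
    induction x with
    | zero =>
      intro _
      refine ⟨?_, ?_, ?_⟩
      · intro i; left; rw [h0]; rfl
      · intro i j
        rw [h0]
        show n + i.val + 1 ≠ n + t + 1
        have := i.isLt
        omega
      · intro m
        rw [h0]
        have : (Finset.univ.filter
            (fun s : Fin (2 * t + 2 * t ^ 2) => Walpha n t (.c m s) = m.val + 1)) =
            Finset.univ := by
          apply Finset.filter_true_of_mem
          intro s _
          rfl
        rw [this, Finset.card_univ, Fintype.card_fin]
        omega
    | succ x ih =>
      intro hx1
      have hxℓ : x < ℓ := hx1
      obtain ⟨ihg, ihb, ihc⟩ := ih (le_of_lt hxℓ)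
      have huniq := hone x hxℓ
      have hguard : ∀ m : Fin (n + t + 1), ∃ s, seq x (.c m s) = m.val + 1 := by
        intro m
        have h1 := ihc m
        have h2 : 0 < (Finset.univ.filter
            (fun s : Fin (2 * t + 2 * t ^ 2) => seq x (.c m s) = m.val + 1)).card := by
          omega
        obtain ⟨s, hs⟩ := Finset.card_pos.mp h2
        exact ⟨s, (Finset.mem_filter.mp hs).2⟩
      obtain ⟨hmem, hadj⟩ := hcol (x + 1) hx1
      refine ⟨?_, ?_, ?_⟩
      · intro i
        by_cases hch : seq (x + 1) (.g i) = seq x (.g i)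
        · rw [hch]; exact ihg i
        · have hc_unch : ∀ (m : Fin (n + t + 1)) s,
              seq (x + 1) (.c m s) = seq x (.c m s) := by
            intro m s
            by_contra hne
            have := huniq (.g i) (.c m s) (fun h => hch h.symm) (fun h => hne h.symm)
            simp at this
          have hv := hmem (.g i)
          rw [Finset.mem_Icc] at hv
          by_contra hcon
          push_neg at hcon
          obtain ⟨hv1, hv2⟩ := hcon
          set v := seq (x + 1) (.g i) with hvdef
          have hm0 : v - 1 < n + t + 1 := by omega
          set m : Fin (n + t + 1) := ⟨v - 1, hm0⟩ with hmdef
          have hmi : m.val ≠ i.val := by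
            simp only [hmdef]
            omega
          have hmnt : m.val ≠ n + t := by
            simp only [hmdef]
            omega
          obtain ⟨s, hs⟩ := hguard m
          have hadj1 : (Wgraph n t G).Adj (.g i) (.c m s) := ⟨hmi, hmnt⟩
          have := hadj _ _ hadj1
          rw [hc_unch m s, hs] at this
          simp only [hmdef] at this
          omega
      · intro i j
        by_cases hch : seq (x + 1) (.b i j) = seq x (.b i j)
        · rw [hch]; exact ihb i j
        · have hc_unch : ∀ (m : Fin (n + t + 1)) s,
              seq (x + 1) (.c m s) = seq x (.c m s) := by
            intro m s
            by_contra hne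
            have := huniq (.b i j) (.c m s) (fun h => hch h.symm) (fun h => hne h.symm)
            simp at this
          set m : Fin (n + t + 1) := ⟨n + t, by omega⟩ with hmdef
          obtain ⟨s, hs⟩ := hguard m
          have hadj1 : (Wgraph n t G).Adj (.b i j) (.c m s) := rfl
          have := hadj _ _ hadj1
          rw [hc_unch m s, hs] at this
          simpa using this
      · intro m
        set A := Finset.univ.filter
          (fun s : Fin (2 * t + 2 * t ^ 2) => seq x (.c m s) = m.val + 1) with hA
        set B := Finset.univ.filter
          (fun s : Fin (2 * t + 2 * t ^ 2) => seq (x + 1) (.c m s) = m.val + 1) with hB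
        have hsd : (A \ B).card ≤ 1 := by
          apply Finset.card_le_one.mpr
          intro s hs s' hs'
          rw [Finset.mem_sdiff, Finset.mem_filter] at hs hs'
          have h1 : seq x (.c m s) ≠ seq (x + 1) (.c m s) := by
            intro h
            exact hs.2 (Finset.mem_filter.mpr ⟨Finset.mem_univ _, h ▸ hs.1.2⟩)
          have h2 : seq x (.c m s') ≠ seq (x + 1) (.c m s') := by
            intro h
            exact hs'.2 (Finset.mem_filter.mpr ⟨Finset.mem_univ _, h ▸ hs'.1.2⟩)
          have := huniq _ _ h1 h2
          simpa using this
        have heq : (A ∩ B).card + (A \ B).card = A.card :=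
          Finset.card_inter_add_card_sdiff A B
        have hAB : (A ∩ B).card ≤ B.card := Finset.card_le_card (Finset.inter_subset_right)
        have hcA := ihc m
        rw [← hA] at hcA
        omega
  constructor
  · intro i x hx
    exact (key x hx).1 i
  · intro i j x hx
    exact (key x hx).2.1 i j
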